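/- Under the conditions A ≥ L²γ/(16ε²) and B ≥ L/(2ε), the SL-CN scheme satisfies the discrete energy dissipation law: for every n ≥ 1, E_CN^{n+1} ≤ E_CN^n − (2√(A/γ) − L/(2ε))‖δ_tφ^{n+1}‖² − (B/2 − L/(4ε))‖δ_{tt}φ^{n+1}‖². In particular, since both subtracted coefficients are nonnegative, E_CN^{n+1} ≤ E_CN^n for all n ≥ 1, i.e. the scheme is unconditionally energy stable (no restriction on the time step τ). -/

import Mathlib

set_option maxHeartbeats 1000000


open scoped RealInnerProductSpace
open Finset

private lemma tangent_le_aux {g : ℝ → ℝ} (hg : ConvexOn ℝ Set.univ g)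
    (hgd : Differentiable ℝ g) (c x : ℝ) :
    g c + deriv g c * (x - c) ≤ g x := by
  rcases lt_trichotomy c x with h | h | h
  · have hs := hg.deriv_le_slope (Set.mem_univ c) (Set.mem_univ x) h (hgd c)
    rw [slope_def_field] at hs
    rw [le_div_iff₀ (by linarith : (0:ℝ) < x - c)] at hs
    linarith
  · subst h; simp
  · have hs := hg.slope_le_deriv (Set.mem_univ x) (Set.mem_univ c) h (hgd c)
    rw [slope_def_field] at hs
    rw [div_le_iff₀ (by linarith : (0:ℝ) < c - x)] at hs
    linarith

private lemma taylor_upper_aux {F : ℝ → ℝ} (hF : ContDiff ℝ 2 F) {L : ℝ} (hL : 0 ≤ L)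
    (hf' : ∀ x : ℝ, |deriv (deriv F) x| ≤ L) (c x : ℝ) :
    F x ≤ F c + deriv F c * (x - c) + L / 2 * (x - c) ^ 2 := by
  have hFd : Differentiable ℝ F := hF.differentiable (by norm_num)
  have hF1 : ContDiff ℝ 1 (deriv F) := by
    have h := (contDiff_succ_iff_deriv (n := 1)).mp (by exact_mod_cast hF)
    exact h.2.2
  have hF'd : Differentiable ℝ (deriv F) := hF1.differentiable (by norm_num)
  set g : ℝ → ℝ := fun y => L / 2 * y ^ 2 - F y with hg_def
  have hq : Differentiable ℝ (fun y : ℝ => L / 2 * y ^ 2) :=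
    (differentiable_pow 2).const_mul (L / 2)
  have hgd : Differentiable ℝ g := hq.sub hFd
  have hg' : deriv g = fun y => L * y - deriv F y := by
    funext y
    rw [hg_def, deriv_fun_sub (hq y) (hFd y), deriv_const_mul _ (differentiable_pow 2 y),
      deriv_pow_field 2]
    ring
  have hg'd : Differentiable ℝ (deriv g) := by
    rw [hg']
    exact (differentiable_id.const_mul L).sub hF'd
  have hg'' : ∀ y, 0 ≤ deriv^[2] g y := by
    intro y
    have h2 : deriv^[2] g y = deriv (deriv g) y := by
      simp [Function.iterate_succ, Function.comp]
    have h1 : HasDerivAt (fun z : ℝ => L * z - deriv F z) (L * 1 - deriv (deriv F) y) y :=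
      ((hasDerivAt_id' y).const_mul L).sub ((hF'd y).hasDerivAt)
    rw [h2, hg', h1.deriv]
    have hb := (abs_le.mp (hf' y)).2
    nlinarith [hb]
  have hconv : ConvexOn ℝ Set.univ g := convexOn_univ_of_deriv2_nonneg hgd hg'd hg''
  have htan := tangent_le_aux hconv hgd c x
  have hdg : deriv g c = L * c - deriv F c := by rw [hg']
  rw [hdg, hg_def] at htan
  simp only at htan
  nlinarith [htan]

private lemma taylor_lower_aux {F : ℝ → ℝ} (hF : ContDiff ℝ 2 F) {L : ℝ} (hL : 0 ≤ L)
    (hf' : ∀ x : ℝ, |deriv (deriv F) x| ≤ L) (c x : ℝ) :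
    F c + deriv F c * (x - c) - L / 2 * (x - c) ^ 2 ≤ F x := by
  have hFd : Differentiable ℝ F := hF.differentiable (by norm_num)
  have hF1 : ContDiff ℝ 1 (deriv F) := by
    have h := (contDiff_succ_iff_deriv (n := 1)).mp (by exact_mod_cast hF)
    exact h.2.2
  have hF'd : Differentiable ℝ (deriv F) := hF1.differentiable (by norm_num)
  have hderiv_neg : deriv (fun y => -F y) = fun y => -deriv F y := by
    funext y; exact deriv.neg
  have hG : ContDiff ℝ 2 (fun y => -F y) := hF.neg
  have hG' : ∀ y : ℝ, |deriv (deriv (fun z => -F z)) y| ≤ L := by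
    intro y
    rw [hderiv_neg]
    have : deriv (fun z => -deriv F z) y = -deriv (deriv F) y := deriv.neg
    rw [this, abs_neg]
    exact hf' y
  have h := taylor_upper_aux hG hL hG' c x
  rw [hderiv_neg] at h
  simp only at h
  linarith

/-- Discrete energy dissipation law for the stabilized linear Crank–Nicolson (SL-CN)
scheme for the Cahn–Hilliard equation (Theorem 2.1): under the stabilization conditions
`A ≥ L²γ/(16ε²)` and `B ≥ L/(2ε)` the modified energy decays at every step,
unconditionally in the time step `τ`. -/
theorem stmt_2 {M : ℕ}
    (K : EuclideanSpace ℝ (Fin M) →ₗ[ℝ] EuclideanSpace ℝ (Fin M))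
    (hKsa : ∀ x y : EuclideanSpace ℝ (Fin M), ⟪K x, y⟫ = ⟪x, K y⟫)
    (hKpsd : ∀ x : EuclideanSpace ℝ (Fin M), 0 ≤ ⟪K x, x⟫)
    (F : ℝ → ℝ) (hF : ContDiff ℝ 2 F)
    (L : ℝ) (hL : 0 ≤ L) (hf' : ∀ x : ℝ, |deriv (deriv F) x| ≤ L)
    (τ γ ε : ℝ) (hτ : 0 < τ) (hγ : 0 < γ) (hε : 0 < ε)
    (A B : ℝ) (hA : 0 ≤ A) (hB : 0 ≤ B)
    (φ μc : ℕ → EuclideanSpace ℝ (Fin M))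
    (hscheme1 : ∀ n, 1 ≤ n → (1/τ) • (φ (n+1) - φ n) = -γ • K (μc n))
    (hscheme2 : ∀ n, 1 ≤ n → μc n =
      ε • K ((1/2 : ℝ) • (φ (n+1) + φ n)) +
      (1/ε) • ((WithLp.equiv 2 (Fin M → ℝ)).symm
          (fun i => deriv F ((3/2) * φ n i - (1/2) * φ (n-1) i))) +
      (A * τ) • K (φ (n+1) - φ n) +
      B • (φ (n+1) - (2:ℝ) • φ n + φ (n-1)))
    (hAcond : A ≥ L^2 * γ / (16 * ε^2)) (hBcond : B ≥ L / (2 * ε)) :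
    ∀ n, 1 ≤ n →
      ((ε/2) * ⟪K (φ (n+1)), φ (n+1)⟫ + (1/ε) * ∑ i, F (φ (n+1) i)
          + (L/(4*ε) + B/2) * ‖φ (n+1) - φ n‖^2
        ≤ (ε/2) * ⟪K (φ n), φ n⟫ + (1/ε) * ∑ i, F (φ n i)
          + (L/(4*ε) + B/2) * ‖φ n - φ (n-1)‖^2
          - (2 * Real.sqrt (A/γ) - L/(2*ε)) * ‖φ (n+1) - φ n‖^2
          - (B/2 - L/(4*ε)) * ‖φ (n+1) - (2:ℝ) • φ n + φ (n-1)‖^2)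
      ∧
      ((ε/2) * ⟪K (φ (n+1)), φ (n+1)⟫ + (1/ε) * ∑ i, F (φ (n+1) i)
          + (L/(4*ε) + B/2) * ‖φ (n+1) - φ n‖^2
        ≤ (ε/2) * ⟪K (φ n), φ n⟫ + (1/ε) * ∑ i, F (φ n i)
          + (L/(4*ε) + B/2) * ‖φ n - φ (n-1)‖^2) := by
  intro n hn
  have e1 := hscheme1 n hn
  have e2 := hscheme2 n hn
  set u : EuclideanSpace ℝ (Fin M) := φ (n+1) with hu
  set v : EuclideanSpace ℝ (Fin M) := φ n with hv
  set w : EuclideanSpace ℝ (Fin M) := φ (n-1) with hw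
  set a : EuclideanSpace ℝ (Fin M) := u - v with ha
  set p : EuclideanSpace ℝ (Fin M) := v - w with hp
  set d : EuclideanSpace ℝ (Fin M) := u - (2:ℝ) • v + w with hd
  have hd_eq : p = a - d := by
    rw [hp, ha, hd]; module
  clear_value u v w a p d
  -- scheme 1: a = -(τ*γ) • K μ
  have ha_eq : a = (-(τ*γ)) • K (μc n) := by
    have h := congrArg (fun z => τ • z) e1
    simp only [smul_smul] at h
    rw [mul_one_div, div_self hτ.ne', one_smul] at h
    rw [h]; congr 1; ring
  set X : ℝ := ⟪K (μc n), μc n⟫ with hX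
  set Y : ℝ := ⟪K a, a⟫ with hY
  set S : ℝ := ⟪K (μc n), a⟫ with hS
  have hXnn : 0 ≤ X := hKpsd _
  have hYnn : 0 ≤ Y := hKpsd _
  -- ‖a‖² = -(τγ) S
  have hnorma : ‖a‖^2 = -(τ*γ) * S := by
    rw [← real_inner_self_eq_norm_sq]
    nth_rewrite 2 [ha_eq]
    rw [real_inner_smul_right, real_inner_comm]
  -- ⟪μ, a⟫ = -(τγ) X
  have hmua : ⟪μc n, a⟫ = -(τ*γ) * X := by
    rw [ha_eq, real_inner_smul_right]
    rw [← hKsa]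
  -- Cauchy–Schwarz for the psd form
  have hCS : S^2 ≤ X * Y := by
    have hq : ∀ t : ℝ, 0 ≤ Y * (t * t) + (2*S) * t + X := by
      intro t
      have hpsd := hKpsd (μc n + t • a)
      have hexp : ⟪K (μc n + t • a), μc n + t • a⟫ = Y * (t*t) + (2*S)*t + X := by
        rw [map_add, map_smul]
        rw [inner_add_left, inner_add_right, inner_add_right,
          real_inner_smul_left, real_inner_smul_left,
          real_inner_smul_right, real_inner_smul_right]
        have hsym : ⟪K a, μc n⟫ = ⟪K (μc n), a⟫ := by
          rw [hKsa, real_inner_comm]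
        rw [hsym, ← hX, ← hY, ← hS]
        ring
      rw [hexp] at hpsd
      exact hpsd
    have hdisc := discrim_le_zero hq
    rw [discrim] at hdisc
    nlinarith only [hdisc]
  -- key inequality: 2 √(A/γ) ‖a‖² ≤ τγX + AτY
  have hSnp : 0 ≤ -S := by
    have h0 : 0 ≤ ‖a‖^2 := sq_nonneg _
    nlinarith only [hnorma, mul_pos hτ hγ, sq_nonneg ‖a‖]
  have hnorma' : ‖a‖^2 = (τ*γ) * (-S) := by rw [hnorma]; ring
  have hsle : -S ≤ Real.sqrt (X*Y) := by
    rw [show -S = Real.sqrt ((-S)^2) from (Real.sqrt_sq hSnp).symm]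
    apply Real.sqrt_le_sqrt
    nlinarith only [hCS]
  have hrγ : Real.sqrt (A/γ) * γ = Real.sqrt (A*γ) := by
    rw [show A*γ = (A/γ) * γ^2 by field_simp, Real.sqrt_mul (div_nonneg hA hγ.le),
      Real.sqrt_sq hγ.le]
  have huv : Real.sqrt (A*γ) * Real.sqrt (X*Y)
      = Real.sqrt (γ*X) * Real.sqrt (A*Y) := by
    rw [← Real.sqrt_mul (mul_nonneg hA hγ.le), ← Real.sqrt_mul (mul_nonneg hγ.le hXnn)]
    congr 1
    ring
  have hu2 : (Real.sqrt (γ*X))^2 = γ*X := Real.sq_sqrt (mul_nonneg hγ.le hXnn)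
  have hv2 : (Real.sqrt (A*Y))^2 = A*Y := Real.sq_sqrt (mul_nonneg hA hYnn)
  have key : 2 * Real.sqrt (A/γ) * ‖a‖^2 ≤ τ*γ*X + A*τ*Y := by
    have c1 : 2 * Real.sqrt (A/γ) * ‖a‖^2 = 2*τ*(Real.sqrt (A*γ) * (-S)) := by
      rw [hnorma', ← hrγ]; ring
    have c2 : Real.sqrt (A*γ) * (-S) ≤ Real.sqrt (A*γ) * Real.sqrt (X*Y) :=
      mul_le_mul_of_nonneg_left hsle (Real.sqrt_nonneg _)
    have c3 : 2 * (Real.sqrt (γ*X) * Real.sqrt (A*Y)) ≤ γ*X + A*Y := by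
      nlinarith only [two_mul_le_add_sq (Real.sqrt (γ*X)) (Real.sqrt (A*Y)), hu2, hv2]
    calc 2 * Real.sqrt (A/γ) * ‖a‖^2 = 2*τ*(Real.sqrt (A*γ) * (-S)) := c1
      _ ≤ 2*τ*(Real.sqrt (A*γ) * Real.sqrt (X*Y)) := by nlinarith only [c2, hτ.le]
      _ = τ * (2 * (Real.sqrt (γ*X) * Real.sqrt (A*Y))) := by rw [huv]; ring
      _ ≤ τ * (γ*X + A*Y) := by nlinarith only [c3, hτ.le]
      _ = τ*γ*X + A*τ*Y := by ring
  -- kinetic identity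
  have hkin : ⟪K u, u⟫ - ⟪K v, v⟫ = ⟪K (u + v), a⟫ := by
    rw [ha, map_add, inner_add_left, inner_sub_right, inner_sub_right]
    have h1 : ⟪K u, v⟫ = ⟪K v, u⟫ := by rw [hKsa, real_inner_comm]
    linarith only [h1]
  -- inner of scheme 2 with a
  set fv : EuclideanSpace ℝ (Fin M) :=
    (WithLp.equiv 2 (Fin M → ℝ)).symm
      (fun i => deriv F ((3/2) * v i - (1/2) * w i)) with hfv
  set T : ℝ := ⟪fv, a⟫ with hT
  have h3 : ε * ((1/2) * ⟪K (u + v), a⟫) + (1/ε) * T + (A*τ) * Y + B * ⟪d, a⟫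
      = -(τ*γ) * X := by
    have hmu2 : ⟪μc n, a⟫ =
        ε * ⟪K ((1/2 : ℝ) • (u + v)), a⟫ + (1/ε) * ⟪fv, a⟫
          + (A*τ) * ⟪K a, a⟫ + B * ⟪d, a⟫ := by
      nth_rewrite 1 [e2]
      rw [inner_add_left, inner_add_left, inner_add_left,
        real_inner_smul_left, real_inner_smul_left, real_inner_smul_left,
        real_inner_smul_left]
    have hhalf : ⟪K ((1/2 : ℝ) • (u + v)), a⟫ = (1/2) * ⟪K (u + v), a⟫ := by
      rw [map_smul, real_inner_smul_left]
    rw [hhalf] at hmu2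
    rw [← hT, ← hY] at hmu2
    linarith only [hmua, hmu2]
  -- d-a identity
  have hda_gen : ∀ x y : EuclideanSpace ℝ (Fin M),
      2 * ⟪x, y⟫ = ‖y‖^2 + ‖x‖^2 - ‖y - x‖^2 := by
    intro x y
    rw [norm_sub_sq_real, real_inner_comm x y]
    ring
  have hda : 2 * ⟪d, a⟫ = ‖a‖^2 + ‖d‖^2 - ‖p‖^2 := by
    rw [hd_eq]
    exact hda_gen d a
  -- pointwise Taylor bound and summation
  have hnorm_sum : ∀ z : EuclideanSpace ℝ (Fin M), ‖z‖^2 = ∑ i, z i ^ 2 := by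
    intro z
    rw [← real_inner_self_eq_norm_sq]
    simp [PiLp.inner_apply, RCLike.inner_apply, sq]
    rw [← sq, EuclideanSpace.norm_sq_eq]
    simp [Real.norm_eq_abs, sq]
  have happly : ∀ i, a i = u i - v i := by
    intro i; rw [ha]; simp
  have hdapply : ∀ i, d i = u i - 2 * v i + w i := by
    intro i; rw [hd]; simp [two_smul]; ring
  have hpt : ∀ i, F (u i) - F (v i) ≤
      deriv F ((3/2) * v i - (1/2) * w i) * (a i)
        + L/4 * ((a i)^2 + (d i)^2) := by
    intro i
    have h1 := taylor_upper_aux hF hL hf' ((3/2) * v i - (1/2) * w i) (u i)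
    have h2 := taylor_lower_aux hF hL hf' ((3/2) * v i - (1/2) * w i) (v i)
    rw [happly i, hdapply i]
    have hkey : L/2*(u i - ((3/2) * v i - (1/2) * w i))^2
        + L/2*(v i - ((3/2) * v i - (1/2) * w i))^2
        = L/4*((u i - v i)^2 + (u i - 2*v i + w i)^2) := by ring
    linarith only [h1, h2, hkey]
  have hsum : (∑ i, F (u i)) - (∑ i, F (v i)) ≤ T + L/4 * (‖a‖^2 + ‖d‖^2) := by
    have h1 : ∑ i, (F (u i) - F (v i)) ≤
        ∑ i, (deriv F ((3/2) * v i - (1/2) * w i) * (a i)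
          + L/4 * ((a i)^2 + (d i)^2)) :=
      Finset.sum_le_sum (fun i _ => hpt i)
    have hTsum : T = ∑ i, deriv F ((3/2) * v i - (1/2) * w i) * (a i) := by
      rw [hT, hfv]
      simp [PiLp.inner_apply, RCLike.inner_apply]
      exact Finset.sum_congr rfl (fun i _ => mul_comm _ _)
    rw [Finset.sum_sub_distrib] at h1
    rw [hTsum, hnorm_sum a, hnorm_sum d]
    calc (∑ i, F (u i)) - (∑ i, F (v i)) ≤
        ∑ i, (deriv F ((3/2) * v i - (1/2) * w i) * (a i)
          + L/4 * ((a i)^2 + (d i)^2)) := h1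
      _ = (∑ i, deriv F ((3/2) * v i - (1/2) * w i) * (a i))
          + L/4 * ((∑ i, (a i)^2) + (∑ i, (d i)^2)) := by
        rw [Finset.sum_add_distrib, ← Finset.mul_sum, Finset.sum_add_distrib]
  -- combine
  have hsum' : (1/ε) * ((∑ i, F (u i)) - (∑ i, F (v i)))
      ≤ (1/ε) * (T + L/4 * (‖a‖^2 + ‖d‖^2)) :=
    mul_le_mul_of_nonneg_left hsum (by positivity)
  have h3' : ε * ((1/2) * ⟪K (u + v), a⟫) + (1/ε) * T
      = -(τ*γ) * X - (A*τ) * Y - (B/2) * (‖a‖^2 + ‖d‖^2 - ‖p‖^2) := by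
    linear_combination h3 - (B/2) * hda
  have hLNp : 0 ≤ L/(4*ε) * ‖p‖^2 := by positivity
  have goal1 : (ε/2) * ⟪K u, u⟫ + (1/ε) * ∑ i, F (u i)
      + (L/(4*ε) + B/2) * ‖a‖^2
    ≤ (ε/2) * ⟪K v, v⟫ + (1/ε) * ∑ i, F (v i)
      + (L/(4*ε) + B/2) * ‖p‖^2
      - (2 * Real.sqrt (A/γ) - L/(2*ε)) * ‖a‖^2
      - (B/2 - L/(4*ε)) * ‖d‖^2 := by
    have hkin' : (ε/2) * ⟪K u, u⟫ - (ε/2) * ⟪K v, v⟫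
        = ε * ((1/2) * ⟪K (u + v), a⟫) := by
      linear_combination (ε/2) * hkin
    have e1 : L/(4*ε) * ‖a‖^2 = (1/ε)*(L/4 * ‖a‖^2) := by ring
    have e2 : L/(4*ε) * ‖d‖^2 = (1/ε)*(L/4 * ‖d‖^2) := by ring
    have e3 : L/(2*ε) * ‖a‖^2 = (1/ε)*(L/4 * ‖a‖^2) + (1/ε)*(L/4 * ‖a‖^2) := by ring
    have e4 : L/(4*ε) * ‖p‖^2 = (1/ε)*(L/4 * ‖p‖^2) := by ring
    linarith only [hsum', h3', key, hkin', hLNp, e1, e2, e3, e4]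
  constructor
  · exact goal1
  · have hr : L/(4*ε) ≤ Real.sqrt (A/γ) := by
      have h1 : (L/(4*ε))^2 ≤ A/γ := by
        rw [le_div_iff₀ hγ]
        calc (L/(4*ε))^2 * γ = L^2*γ/(16*ε^2) := by rw [div_pow]; ring
          _ ≤ A := hAcond
      exact (Real.le_sqrt (by positivity) (by positivity)).mpr h1
    have ht1 : 0 ≤ (2 * Real.sqrt (A/γ) - L/(2*ε)) * ‖a‖^2 := by
      apply mul_nonneg _ (sq_nonneg _)
      have h2 : L/(2*ε) = 2 * (L/(4*ε)) := by ring
      linarith only [hr, h2]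
    have ht2 : 0 ≤ (B/2 - L/(4*ε)) * ‖d‖^2 := by
      apply mul_nonneg _ (sq_nonneg _)
      have h2 : L/(4*ε) = (L/(2*ε))/2 := by ring
      linarith only [hBcond, h2]
    linarith only [goal1, ht1, ht2]
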